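/- Let R be a Noetherian local ring with maximal ideal 𝔪, let R̂ denote the 𝔪-adic completion of R (AdicCompletion 𝔪 R, an R-algebra), let M be an R-module and m ∈ M. Then the annihilator of the element m ⊗ 1 of the R̂-module M ⊗[R] R̂ equals the extension of the annihilator of m: { a ∈ R̂ | a • (m ⊗ 1) = 0 } = Ideal.map (algebraMap R R̂) { r ∈ R | r • m = 0 }. -/

import Mathlib

open TensorProduct

/-- **Annihilators and completion:** for a Noetherian local ring `(R, 𝔪)` with
`𝔪`-adic completion `Rc = AdicCompletion 𝔪 R`, an `R`-module `M` and `m ∈ M`, the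
annihilator in `Rc` of the element `m ⊗ 1` of `M ⊗[R] Rc` (written here as
`1 ⊗ₜ m ∈ Rc ⊗[R] M`, using the canonical `Rc`-module structure) is the extension
`(ann m)·Rc` of the annihilator of `m`. -/
theorem annihilator_tmul_one_eq_map (R : Type*) [CommRing R] [IsNoetherianRing R]
    [IsLocalRing R] (𝔪 : Ideal R) (h𝔪 : 𝔪 = IsLocalRing.maximalIdeal R)
    (M : Type*) [AddCommGroup M] [Module R M] (m : M)
    (ann : Ideal R) (hann : ∀ r : R, r ∈ ann ↔ r • m = 0)
    (Ann : Ideal (AdicCompletion 𝔪 R))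
    (hAnn : ∀ a : AdicCompletion 𝔪 R,
      a ∈ Ann ↔ a • ((1 : AdicCompletion 𝔪 R) ⊗ₜ[R] m) = 0) :
    Ann = Ideal.map (algebraMap R (AdicCompletion 𝔪 R)) ann := by
  set Rc := AdicCompletion 𝔪 R
  have hflat : Module.Flat R Rc := AdicCompletion.flat_of_isNoetherian 𝔪
  -- exact sequence ann → R → M
  set f : ann →ₗ[R] R := ann.subtype with hf
  set g : R →ₗ[R] M := LinearMap.toSpanSingleton R M m with hg
  have hker : LinearMap.ker g = ann := by
    ext r
    simp [hg, LinearMap.mem_ker, LinearMap.toSpanSingleton_apply, hann r]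
  have hexact : Function.Exact f g := by
    rw [LinearMap.exact_iff, hker, hf, Submodule.range_subtype]
  have hE : Function.Exact (LinearMap.lTensor Rc f) (LinearMap.lTensor Rc g) :=
    Module.Flat.lTensor_exact Rc hexact
  apply le_antisymm
  · intro a ha
    rw [hAnn] at ha
    have ha' : a ⊗ₜ[R] m = 0 := by
      rwa [smul_tmul', smul_eq_mul, mul_one] at ha
    have h0 : LinearMap.lTensor Rc g (a ⊗ₜ[R] (1 : R)) = 0 := by
      simp [LinearMap.lTensor_tmul, hg, LinearMap.toSpanSingleton_apply, ha']
    obtain ⟨t, ht⟩ := (hE _).mp h0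
    -- map back via rid
    have key : ∀ t : Rc ⊗[R] ann,
        (TensorProduct.rid R Rc) (LinearMap.lTensor Rc f t) ∈
          Ideal.map (algebraMap R Rc) ann := by
      intro t
      induction t using TensorProduct.induction_on with
      | zero => rw [LinearMap.map_zero, LinearEquiv.map_zero]; exact Ideal.zero_mem _
      | tmul b x =>
        simp only [LinearMap.lTensor_tmul, hf, Submodule.coe_subtype,
          TensorProduct.rid_tmul]
        rw [Algebra.smul_def]
        exact Ideal.mul_mem_right _ _ (Ideal.mem_map_of_mem _ x.2)
      | add s t hs ht => simpa [map_add] using Ideal.add_mem _ hs ht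
    have := key t
    rw [ht] at this
    simpa using this
  · rw [Ideal.map_le_iff_le_comap]
    intro r hr
    rw [Ideal.mem_comap, hAnn, algebraMap_smul, ← tmul_smul, (hann r).mp hr, tmul_zero]
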